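/- Let L be a set of ℓ-dimensional subspaces of F_q^n forming a hybrid code capable of correcting D-1 dimension errors and d-1 symbol erasures. Then q^{ℓ(d-1)} · Σ_{i=0}^{(D-1)/2} q^{i²} [ℓ choose i]_q [(n-(d-1)-ℓ) choose i]_q · |L| ≤ [n choose ℓ]_q (sphere-packing bound for hybrid codes). -/

import Mathlib

set_option linter.unusedSectionVars false

noncomputable def deleteCoords {K : Type} [Field K] (n : ℕ) (S : Finset (Fin n)) :
    (Fin n → K) →ₗ[K] ({i : Fin n // i ∉ S} → K) :=
  LinearMap.funLeft K K (fun i => (i : Fin n))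

/-- The subspace distance `D(A,B) = dim A + dim B - 2 dim (A ∩ B)` (as an integer). -/
noncomputable def sdist {K W : Type*} [Field K] [AddCommGroup W] [Module K W]
    (A B : Submodule K W) : ℤ :=
  (Module.finrank K A : ℤ) + (Module.finrank K B : ℤ)
    - 2 * (Module.finrank K ↥(A ⊓ B) : ℤ)

/-- The Gaussian binomial coefficient `[n choose k]_q`, as a rational number. -/
noncomputable def gaussBinom (q n k : ℕ) : ℚ :=
  ∏ i ∈ Finset.range k, ((q : ℚ) ^ (n - i) - 1) / ((q : ℚ) ^ (k - i) - 1)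

namespace SPB
section G1

/-- `∏_{j<k} (q^{j+1} - 1)`. -/
def qf (q k : ℕ) : ℚ := ∏ j ∈ Finset.range k, ((q:ℚ)^(j+1) - 1)

variable {q : ℕ} (hq : 2 ≤ q)
include hq

lemma one_lt_qQ : (1:ℚ) < (q:ℚ) := by exact_mod_cast hq

lemma term_pos {a : ℕ} (ha : 1 ≤ a) : (0:ℚ) < (q:ℚ)^a - 1 := by
  have h1 : (1:ℚ) < (q:ℚ) := one_lt_qQ hq
  have h2 : (1:ℚ) < (q:ℚ)^a := one_lt_pow₀ h1 (by omega)
  linarith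

lemma qf_pos (k : ℕ) : 0 < qf q k := by
  apply Finset.prod_pos
  intro j _
  exact term_pos hq (by omega)

lemma prod_num {n k : ℕ} (hk : k ≤ n) :
    ∏ j ∈ Finset.range k, ((q:ℚ)^(n-j) - 1) = qf q n / qf q (n-k) := by
  induction k with
  | zero => simp [Nat.sub_zero, div_self (qf_pos hq n).ne']
  | succ k ih =>
      have hk' : k ≤ n := by omega
      rw [Finset.prod_range_succ, ih hk']
      have h1 : n - k = (n - (k+1)) + 1 := by omega
      have h2 : qf q (n-k) = qf q (n-(k+1)) * ((q:ℚ)^(n-k) - 1) := by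
        rw [h1, qf, Finset.prod_range_succ, ← h1]; rfl
      rw [h2]
      have h3 := (qf_pos hq (n-(k+1))).ne'
      have h4 := (term_pos hq (a := n-k) (by omega)).ne'
      field_simp

lemma gaussBinom_eq {n k : ℕ} (hk : k ≤ n) :
    gaussBinom q n k = qf q n / (qf q (n-k) * qf q k) := by
  rw [gaussBinom, Finset.prod_div_distrib, prod_num hq hk, prod_num hq (le_refl k)]
  rw [Nat.sub_self]
  have h0 : qf q 0 = 1 := by simp [qf]
  rw [h0]
  field_simp

lemma gaussBinom_symm {n k : ℕ} (hk : k ≤ n) :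
    gaussBinom q n k = gaussBinom q n (n-k) := by
  rw [gaussBinom_eq hq hk, gaussBinom_eq hq (Nat.sub_le n k)]
  have : n - (n-k) = k := by omega
  rw [this, mul_comm]

lemma gaussBinom_pos {n k : ℕ} (hk : k ≤ n) : 0 < gaussBinom q n k := by
  rw [gaussBinom_eq hq hk]
  exact div_pos (qf_pos hq n) (mul_pos (qf_pos hq _) (qf_pos hq _))

lemma gaussBinom_zero_of_lt {n k : ℕ} (h : n < k) : gaussBinom q n k = 0 := by
  rw [gaussBinom]
  apply Finset.prod_eq_zero (Finset.mem_range.2 h)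
  simp [Nat.sub_self]

lemma step5 {ℓ m n : ℕ} (hlm : ℓ ≤ m) (hmn : m ≤ n) :
    (q:ℚ)^(ℓ*(n-m)) * gaussBinom q m ℓ ≤ gaussBinom q n ℓ := by
  have hq1 : (1:ℚ) < (q:ℚ) := one_lt_qQ hq
  have hq0 : (0:ℚ) < (q:ℚ) := by linarith
  rw [gaussBinom, gaussBinom]
  have hpow : (q:ℚ)^(ℓ*(n-m)) = ∏ _i ∈ Finset.range ℓ, (q:ℚ)^(n-m) := by
    rw [Finset.prod_const, Finset.card_range, ← pow_mul, mul_comm]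
  rw [hpow, ← Finset.prod_mul_distrib]
  apply Finset.prod_le_prod
  · intro i hi
    have hi' : i < ℓ := Finset.mem_range.1 hi
    apply mul_nonneg (by positivity)
    apply div_nonneg
    · have := term_pos hq (a := m - i) (by omega); linarith
    · have := term_pos hq (a := ℓ - i) (by omega); linarith
  · intro i hi
    have hi' : i < ℓ := Finset.mem_range.1 hi
    have hd : (0:ℚ) < (q:ℚ)^(ℓ-i) - 1 := term_pos hq (by omega)
    rw [← mul_div_assoc, div_le_div_iff₀ hd hd]
    have key : (q:ℚ)^(n-m) * ((q:ℚ)^(m-i) - 1) ≤ (q:ℚ)^(n-i) - 1 := by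
      have hsplit : (q:ℚ)^(n-m) * (q:ℚ)^(m-i) = (q:ℚ)^(n-i) := by
        rw [← pow_add]; congr 1; omega
      have h1 : (1:ℚ) ≤ (q:ℚ)^(n-m) := one_le_pow₀ hq1.le
      nlinarith
    nlinarith

end G1


open Module Finset

variable {K : Type} [Field K] [Fintype K] {M : Type*} [AddCommGroup M] [Module K M] [Fintype M]

noncomputable instance instFintypeSubmoduleSPB : Fintype (Submodule K M) :=
  @Fintype.ofFinite _ (Finite.of_injective _ (SetLike.coe_injective (A := Submodule K M)))

open Classical in
lemma card_indep (k : ℕ) :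
    (Finset.univ.filter (fun f : Fin k → M => LinearIndependent K f)).card
      = ∏ j ∈ Finset.range k,
          (Fintype.card K ^ (Module.finrank K M) - Fintype.card K ^ j) := by
  induction k with
  | zero =>
      rw [Finset.prod_range_zero, Finset.filter_true_of_mem, Finset.card_univ,
        Fintype.card_fun]
      · simp
      · intro f _; exact linearIndependent_empty_type
  | succ k ih =>
      rw [Finset.prod_range_succ, ← ih]
      rw [Finset.card_eq_sum_card_fiberwise
        (f := fun f : Fin (k+1) → M => Fin.tail f)
        (t := Finset.univ.filter (fun f : Fin k → M => LinearIndependent K f))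
        (fun f hf => by
          simp only [Finset.coe_filter, Finset.mem_coe, Set.mem_setOf_eq, Finset.mem_filter, Finset.mem_univ, true_and] at hf ⊢
          rw [← Fin.cons_self_tail f] at hf
          exact (linearIndependent_fin_cons.1 hf).1)]
      rw [Finset.sum_congr rfl (fun t ht => ?_), Finset.sum_const, smul_eq_mul]
      simp only [Finset.mem_filter, Finset.mem_univ, true_and] at ht
      -- fiber over t has card q^rank - q^k
      have hspan : Module.finrank K ↥(Submodule.span K (Set.range t)) = k := by
        rw [finrank_span_eq_card ht, Fintype.card_fin]
      have hcard_span : Fintype.card ↥(Submodule.span K (Set.range t))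
          = Fintype.card K ^ k := by
        rw [card_eq_pow_finrank (K := K), hspan]
      rw [Finset.card_bij (i := fun (f : Fin (k+1) → M) _ => f 0)
        (t := Finset.univ.filter
          (fun x : M => x ∉ Submodule.span K (Set.range t)))]
      · -- card of the complement of the span
        rw [Finset.filter_not, Finset.card_sdiff_of_subset (Finset.filter_subset _ _)]
        rw [Finset.card_univ]
        have h5 : (Finset.univ.filter
            (fun x : M => x ∈ Submodule.span K (Set.range t))).card
            = Fintype.card K ^ k := by
          rw [← hcard_span, Fintype.card_subtype]
        rw [h5, card_eq_pow_finrank (K := K) (V := M)]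
      · intro f hf
        simp only [Finset.mem_filter, Finset.mem_univ, true_and] at hf ⊢
        obtain ⟨hind, htail⟩ := hf
        rw [← Fin.cons_self_tail f] at hind
        have := (linearIndependent_fin_cons.1 hind).2
        rwa [htail] at this
      · intro f hf g hg hfg
        simp only [Finset.mem_filter, Finset.mem_univ, true_and] at hf hg
        rw [← Fin.cons_self_tail f, ← Fin.cons_self_tail g, hf.2, hg.2, hfg]
      · intro x hx
        simp only [Finset.mem_filter, Finset.mem_univ, true_and] at hx
        refine ⟨Fin.cons x t, ?_, ?_⟩
        · simp only [Finset.mem_filter, Finset.mem_univ, true_and]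
          exact ⟨linearIndependent_fin_cons.2 ⟨ht, hx⟩, by funext j; simp⟩
        · simp

open Classical in
lemma card_subspaces_mul (k : ℕ) :
    (Finset.univ.filter
        (fun p : Submodule K M => Module.finrank K ↥p = k)).card
      * ∏ j ∈ Finset.range k, (Fintype.card K ^ k - Fintype.card K ^ j)
      = ∏ j ∈ Finset.range k,
          (Fintype.card K ^ (Module.finrank K M) - Fintype.card K ^ j) := by
  rw [← card_indep (K := K) (M := M) k]
  rw [Finset.card_eq_sum_card_fiberwise
    (f := fun f : Fin k → M => Submodule.span K (Set.range f))
    (t := Finset.univ.filter (fun p : Submodule K M => Module.finrank K ↥p = k))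
    (fun f hf => by
      simp only [Finset.coe_filter, Finset.mem_coe, Set.mem_setOf_eq, Finset.mem_filter, Finset.mem_univ, true_and] at hf ⊢
      rw [finrank_span_eq_card hf, Fintype.card_fin])]
  rw [Finset.sum_congr rfl (fun p hp => ?_), Finset.sum_const, smul_eq_mul, mul_comm]
  simp only [Finset.mem_filter, Finset.mem_univ, true_and] at hp
  have := card_indep (K := K) (M := ↥p) k
  rw [hp] at this
  rw [← this]
  apply Finset.card_bij
    (i := fun (f : Fin k → M) (hf : f ∈ _) => (fun j =>
      (⟨f j, by
        simp only [Finset.mem_filter, Finset.mem_univ, true_and] at hf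
        rw [← hf.2]
        exact Submodule.subset_span (Set.mem_range_self j)⟩ : ↥p)))
  · intro f hf
    simp only [Finset.mem_filter, Finset.mem_univ, true_and] at hf ⊢
    apply LinearIndependent.of_comp p.subtype
    convert hf.1
    rfl
  · intro f hf g hg hfg
    funext j
    have := congrFun hfg j
    simpa [Subtype.ext_iff] using this
  · intro g hg
    simp only [Finset.mem_filter, Finset.mem_univ, true_and] at hg
    refine ⟨fun j => (g j : M), ?_, ?_⟩
    · simp only [Finset.mem_filter, Finset.mem_univ, true_and]
      have hind : LinearIndependent K (fun j => ((g j : M))) :=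
        hg.map' p.subtype (Submodule.ker_subtype p)
      refine ⟨hind, ?_⟩
      apply Submodule.eq_of_le_of_finrank_eq
      · rw [Submodule.span_le]
        rintro _ ⟨j, rfl⟩
        exact (g j).2
      · rw [finrank_span_eq_card hind, Fintype.card_fin, hp]
    · funext j; rfl



open Module Finset

variable {K : Type} [Field K] [Fintype K] {M : Type*} [AddCommGroup M] [Module K M] [Fintype M]

lemma prod_sub_cast {k t : ℕ} (hkt : k ≤ t) :
    ((∏ j ∈ Finset.range k, (Fintype.card K ^ t - Fintype.card K ^ j) : ℕ) : ℚ)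
      = ∏ j ∈ Finset.range k, (((Fintype.card K : ℚ))^t - (Fintype.card K : ℚ)^j) := by
  rw [Nat.cast_prod]
  refine Finset.prod_congr rfl fun j hj => ?_
  have hj' : j < k := Finset.mem_range.1 hj
  rw [Nat.cast_sub (Nat.pow_le_pow_right (by have := Fintype.card_pos (α := K); omega)
    (by omega))]
  push_cast; ring

lemma prod_sub_factor {k t : ℕ} (hkt : k ≤ t) :
    ∏ j ∈ Finset.range k, (((Fintype.card K : ℚ))^t - (Fintype.card K : ℚ)^j)
      = (∏ j ∈ Finset.range k, (Fintype.card K : ℚ)^j)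
        * ∏ j ∈ Finset.range k, ((Fintype.card K : ℚ)^(t-j) - 1) := by
  rw [← Finset.prod_mul_distrib]
  refine Finset.prod_congr rfl fun j hj => ?_
  have hj' : j < k := Finset.mem_range.1 hj
  have : (Fintype.card K : ℚ)^t = (Fintype.card K : ℚ)^j * (Fintype.card K : ℚ)^(t-j) := by
    rw [← pow_add]; congr 1; omega
  rw [this]; ring

open Classical in
lemma card_subspaces_q (k : ℕ) (hk : k ≤ Module.finrank K M) :
    ((Finset.univ.filter
        (fun p : Submodule K M => Module.finrank K ↥p = k)).card : ℚ)
      = gaussBinom (Fintype.card K) (Module.finrank K M) k := by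
  have hq2 : 2 ≤ Fintype.card K := Fintype.one_lt_card
  have hq1 : (1:ℚ) < (Fintype.card K : ℚ) := by exact_mod_cast hq2
  set t := Module.finrank K M with ht
  have hmain := card_subspaces_mul (K := K) (M := M) k
  have hcast : ((Finset.univ.filter
        (fun p : Submodule K M => Module.finrank K ↥p = k)).card : ℚ)
      * ∏ j ∈ Finset.range k, (((Fintype.card K : ℚ))^k - (Fintype.card K : ℚ)^j)
      = ∏ j ∈ Finset.range k, (((Fintype.card K : ℚ))^t - (Fintype.card K : ℚ)^j) := by
    rw [← prod_sub_cast (le_refl k), ← prod_sub_cast hk, ← Nat.cast_mul, hmain]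
  rw [prod_sub_factor (le_refl k), prod_sub_factor hk] at hcast
  have hP : (0:ℚ) < ∏ j ∈ Finset.range k, (Fintype.card K : ℚ)^j :=
    Finset.prod_pos fun j _ => by positivity
  have hB : (0:ℚ) < ∏ j ∈ Finset.range k, ((Fintype.card K : ℚ)^(k-j) - 1) :=
    Finset.prod_pos fun j hj => by
      have hj' : j < k := Finset.mem_range.1 hj
      have : (1:ℚ) < (Fintype.card K : ℚ)^(k-j) := one_lt_pow₀ hq1 (by omega)
      linarith
  rw [gaussBinom, Finset.prod_div_distrib]
  rw [eq_div_iff hB.ne']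
  refine mul_left_cancel₀ hP.ne' ?_
  rw [show (∏ j ∈ Finset.range k, (Fintype.card K : ℚ)^j) *
      (((Finset.univ.filter
        (fun p : Submodule K M => Module.finrank K ↥p = k)).card : ℚ) *
      ∏ j ∈ Finset.range k, ((Fintype.card K : ℚ)^(k-j) - 1))
    = ((Finset.univ.filter
        (fun p : Submodule K M => Module.finrank K ↥p = k)).card : ℚ) *
      ((∏ j ∈ Finset.range k, (Fintype.card K : ℚ)^j) *
      ∏ j ∈ Finset.range k, ((Fintype.card K : ℚ)^(k-j) - 1)) from by ring, hcast]

noncomputable instance instFintypeLinearMap' (N : Type*) [AddCommGroup N] [Module K N]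
    [Fintype N] : Fintype (M →ₗ[K] N) :=
  @Fintype.ofFinite _ (Finite.of_injective _ (DFunLike.coe_injective (F := M →ₗ[K] N)))

lemma card_linearMap (N : Type*) [AddCommGroup N] [Module K N] [Fintype N] :
    Fintype.card (M →ₗ[K] N)
      = Fintype.card K ^ (Module.finrank K M * Module.finrank K N) := by
  classical
  have : Module.Finite K M := Module.Finite.of_finite
  have : Module.Finite K N := Module.Finite.of_finite
  let e := ((LinearMap.toMatrix (Module.finBasis K M)
    (Module.finBasis K N)).toEquiv.trans (Matrix.of (m := Fin (Module.finrank K N))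
      (n := Fin (Module.finrank K M)) (α := K)).symm)
  rw [Fintype.card_congr e, Fintype.card_fun, Fintype.card_fun]
  simp [← pow_mul, Fintype.card_fin, mul_comm]


section W
variable {K : Type} [Field K] [Fintype K] {W : Type*} [AddCommGroup W] [Module K W] [Fintype W]

instance : Module.Finite K W := Module.Finite.of_finite


lemma sub_helper {G : Type*} [AddCommGroup G] {l r u v : G} (h : u = v)
    (hk : l - r = u - v) : l = r := by
  rw [h, sub_self, sub_eq_zero] at hk; exact hk



/-- `ψ φ : b ↦ b + φ b`, as a map `B → W`. -/
noncomputable def psi (B A' : Submodule K W) (φ : ↥B →ₗ[K] ↥A') : ↥B →ₗ[K] W :=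
  B.subtype + A'.subtype ∘ₗ φ

lemma psi_apply (B A' : Submodule K W) (φ : ↥B →ₗ[K] ↥A') (b : ↥B) :
    psi B A' φ b = (b : W) + (φ b : W) := rfl

/-- The subspace `A ⊔ {b + φ b : b ∈ B}`. -/
noncomputable def Ucon (A B A' : Submodule K W) (φ : ↥B →ₗ[K] ↥A') : Submodule K W :=
  A ⊔ LinearMap.range (psi B A' φ)

section Con

variable {A A' B C V : Submodule K W} (hAV : A ≤ V) (hA'V : A' ≤ V)
  (hAA' : A ⊓ A' = ⊥) (hBC : B ≤ C) (hVC : IsCompl V C)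
  (φ : ↥B →ₗ[K] ↥A')

include hA'V hBC hVC

lemma psi_inj : Function.Injective (psi B A' φ) := by
  rw [← LinearMap.ker_eq_bot]
  refine (Submodule.eq_bot_iff _).2 fun b hb => ?_
  rw [LinearMap.mem_ker, psi_apply] at hb
  have hbV : (b : W) ∈ V := by
    rw [eq_neg_of_add_eq_zero_left hb]
    exact V.neg_mem (hA'V (φ b).2)
  have : (b : W) ∈ V ⊓ C := ⟨hbV, hBC b.2⟩
  rw [hVC.inf_eq_bot] at this
  exact Subtype.ext this

include hAV in
lemma Ucon_inf : Ucon A B A' φ ⊓ V = A := by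
  apply le_antisymm
  · rintro x ⟨hxU, hxV⟩
    rw [Ucon] at hxU
    obtain ⟨a, ha, y, hy, rfl⟩ := Submodule.mem_sup.1 hxU
    obtain ⟨b, rfl⟩ := hy
    rw [psi_apply] at *
    have hbV : (b : W) ∈ V := by
      have heq : (b : W) = (a + ((b:W) + (φ b : W))) - a - (φ b : W) := by abel
      rw [heq]
      exact V.sub_mem (V.sub_mem hxV (hAV ha)) (hA'V (φ b).2)
    have hb0 : (b : W) ∈ V ⊓ C := ⟨hbV, hBC b.2⟩
    rw [hVC.inf_eq_bot] at hb0
    have hphib : φ b = 0 := by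
      rw [show b = 0 from Subtype.ext hb0, map_zero]
    rw [show (b:W) = 0 from hb0, hphib]
    simpa using ha
  · exact le_inf le_sup_left hAV

include hAV in
lemma Ucon_inf_bot : A ⊓ LinearMap.range (psi B A' φ) = ⊥ := by
  refine (Submodule.eq_bot_iff _).2 fun x hx => ?_
  obtain ⟨hxA, b, hb⟩ := hx
  rw [psi_apply] at hb
  have hbV : (b : W) ∈ V := by
    have heq : (b : W) = x - (φ b : W) := sub_helper hb (by abel)
    rw [heq]
    exact V.sub_mem (hAV hxA) (hA'V (φ b).2)
  have hb0 : (b : W) ∈ V ⊓ C := ⟨hbV, hBC b.2⟩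
  rw [hVC.inf_eq_bot] at hb0
  have hphib : φ b = 0 := by rw [show b = 0 from Subtype.ext hb0, map_zero]
  rw [← hb, show (b:W) = 0 from hb0, hphib]
  simp

include hAV in
lemma Ucon_finrank :
    Module.finrank K ↥(Ucon A B A' φ)
      = Module.finrank K ↥A + Module.finrank K ↥B := by
  have h := Submodule.finrank_sup_add_finrank_inf_eq A (LinearMap.range (psi B A' φ))
  rw [Ucon_inf_bot hAV hA'V hBC hVC φ] at h
  rw [Ucon]
  have hrange : Module.finrank K ↥(LinearMap.range (psi B A' φ))
      = Module.finrank K ↥B :=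
    LinearMap.finrank_range_of_inj (psi_inj hA'V hBC hVC φ)
  rw [hrange] at h
  simpa using h

include hAV in
lemma Ucon_sup_inf : (Ucon A B A' φ ⊔ V) ⊓ C = B := by
  have hsup : Ucon A B A' φ ⊔ V = LinearMap.range (psi B A' φ) ⊔ V := by
    rw [Ucon, sup_assoc, sup_comm _ V, ← sup_assoc, sup_eq_right.2 hAV, sup_comm V]
  rw [hsup]
  apply le_antisymm
  · rintro x ⟨hx1, hxC⟩
    obtain ⟨y, ⟨b, rfl⟩, v, hv, rfl⟩ := Submodule.mem_sup.1 hx1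
    rw [psi_apply] at *
    have hmem : (b:W) + (φ b : W) + v - (b : W) ∈ V ⊓ C := by
      constructor
      · have heq : (b:W) + (φ b:W) + v - (b:W) = (φ b : W) + v := by abel
        rw [heq]
        exact V.add_mem (hA'V (φ b).2) hv
      · exact C.sub_mem hxC (hBC b.2)
    rw [hVC.inf_eq_bot] at hmem
    have heq2 : (b:W) + (φ b : W) + v = (b : W) := by
      have := sub_eq_zero.1 hmem
      exact this
    rw [heq2]
    exact b.2
  · intro x hx
    refine ⟨?_, hBC hx⟩
    apply Submodule.mem_sup.2
    refine ⟨psi B A' φ ⟨x, hx⟩, ⟨⟨x, hx⟩, rfl⟩, -(φ ⟨x, hx⟩ : W), V.neg_mem (hA'V (φ ⟨x, hx⟩).2), ?_⟩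
    rw [psi_apply]; abel

include hAV hAA' in
lemma Ucon_injective (φ₁ φ₂ : ↥B →ₗ[K] ↥A')
    (h : Ucon A B A' φ₁ = Ucon A B A' φ₂) : φ₁ = φ₂ := by
  ext b
  have h1 : psi B A' φ₁ b ∈ Ucon A B A' φ₂ := by
    rw [← h, Ucon]
    exact Submodule.mem_sup_right ⟨b, rfl⟩
  rw [Ucon] at h1
  obtain ⟨a, ha, y, ⟨b', rfl⟩, hab⟩ := Submodule.mem_sup.1 h1
  rw [psi_apply, psi_apply] at hab
  -- hab : a + (b' + φ₂ b') = b + φ₁ b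
  have hbb' : (b:W) - (b':W) ∈ V ⊓ C := by
    constructor
    · have heq : (b:W) - (b':W) = (a + ((φ₂ b') : W)) - ((φ₁ b : W)) :=
        sub_helper hab.symm (by abel)
      rw [heq]
      exact V.sub_mem (V.add_mem (hAV ha) (hA'V (φ₂ b').2)) (hA'V (φ₁ b).2)
    · exact C.sub_mem (hBC b.2) (hBC b'.2)
  rw [hVC.inf_eq_bot] at hbb'
  have hb' : b' = b := by
    apply Subtype.ext
    have := sub_eq_zero.1 hbb'
    exact this.symm
  rw [hb'] at hab
  have haA' : (φ₁ b : W) - (φ₂ b : W) ∈ A ⊓ A' := by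
    constructor
    · have heq : (φ₁ b : W) - (φ₂ b : W) = a := sub_helper hab.symm (by abel)
      rw [heq]; exact ha
    · exact A'.sub_mem (φ₁ b).2 (φ₂ b).2
  rw [hAA'] at haA'
  exact congrArg Subtype.val (Subtype.ext (sub_eq_zero.1 haA'))

end Con






/-- chosen complement of `A` inside `V` (meaningful when `A ≤ V`) -/
noncomputable def compIn (V A : Submodule K W) : Submodule K W :=
  (Classical.choose (Submodule.exists_isCompl
    (Submodule.comap V.subtype A))).map V.subtype

section compIn
variable (V A : Submodule K W) (hAV : A ≤ V)

lemma compIn_le : compIn V A ≤ V := Submodule.map_subtype_le _ _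

lemma compIn_isCompl : IsCompl (Submodule.comap V.subtype A)
    (Classical.choose (Submodule.exists_isCompl (Submodule.comap V.subtype A))) :=
  Classical.choose_spec _

include hAV in
lemma compIn_sup : A ⊔ compIn V A = V := by
  have h := compIn_isCompl V A
  have : Submodule.map V.subtype (Submodule.comap V.subtype A ⊔ _) = Submodule.map V.subtype ⊤ :=
    congrArg _ h.sup_eq_top
  rw [Submodule.map_sup, Submodule.map_comap_subtype, inf_eq_right.2 hAV,
    Submodule.map_top, Submodule.range_subtype] at this
  rw [compIn]
  exact this

include hAV in
lemma compIn_inf : A ⊓ compIn V A = ⊥ := by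
  have h := compIn_isCompl V A
  have h2 : Submodule.map V.subtype (Submodule.comap V.subtype A ⊓ _) = Submodule.map V.subtype ⊥ :=
    congrArg _ h.inf_eq_bot
  rw [Submodule.map_inf _ (Submodule.injective_subtype V), Submodule.map_comap_subtype,
    inf_eq_right.2 hAV, Submodule.map_bot] at h2
  rw [compIn]
  exact h2

include hAV in
lemma compIn_finrank :
    Module.finrank K ↥A + Module.finrank K ↥(compIn V A) = Module.finrank K ↥V := by
  have h := Submodule.finrank_add_eq_of_isCompl (compIn_isCompl V A)
  have e1 : Module.finrank K ↥(Submodule.comap V.subtype A) = Module.finrank K ↥A :=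
    (Submodule.comapSubtypeEquivOfLe hAV).finrank_eq
  have e2 : Module.finrank K ↥(compIn V A) = Module.finrank K
      ↥(Classical.choose (Submodule.exists_isCompl (Submodule.comap V.subtype A))) := by
    rw [compIn]
    exact (Submodule.equivMapOfInjective _ (Submodule.injective_subtype V) _).symm.finrank_eq
  rw [e2, ← e1]
  exact h

end compIn

open Classical in
lemma card_sub_eq (V : Submodule K W) (k : ℕ) :
    (Finset.univ.filter (fun A : Submodule K W =>
        A ≤ V ∧ Module.finrank K ↥A = k)).card
      = (Finset.univ.filter
          (fun A₀ : Submodule K ↥V => Module.finrank K ↥A₀ = k)).card := by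
  apply Finset.card_bij (i := fun A _ => Submodule.comap V.subtype A)
  · intro A hA
    simp only [Finset.mem_filter, Finset.mem_univ, true_and] at hA ⊢
    rw [(Submodule.comapSubtypeEquivOfLe hA.1).finrank_eq]
    exact hA.2
  · intro A1 h1 A2 h2 heq
    simp only [Finset.mem_filter, Finset.mem_univ, true_and] at h1 h2
    have h3 := congrArg (Submodule.map V.subtype) heq
    rwa [Submodule.map_comap_subtype, Submodule.map_comap_subtype,
      inf_eq_right.2 h1.1, inf_eq_right.2 h2.1] at h3
  · intro B hB
    simp only [Finset.mem_filter, Finset.mem_univ, true_and] at hB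
    refine ⟨Submodule.map V.subtype B, ?_, ?_⟩
    · simp only [Finset.mem_filter, Finset.mem_univ, true_and]
      refine ⟨Submodule.map_subtype_le _ _, ?_⟩
      rw [← hB]
      exact ((Submodule.equivMapOfInjective _
        (Submodule.injective_subtype V) B).symm).finrank_eq
    · rw [Submodule.comap_map_eq, Submodule.ker_subtype, sup_bot_eq]

open Classical in
lemma card_sub_q (V : Submodule K W) (k : ℕ) (hk : k ≤ Module.finrank K ↥V) :
    ((Finset.univ.filter (fun A : Submodule K W =>
        A ≤ V ∧ Module.finrank K ↥A = k)).card : ℚ)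
      = gaussBinom (Fintype.card K) (Module.finrank K ↥V) k := by
  rw [card_sub_eq]
  exact_mod_cast card_subspaces_q (M := ↥V) k hk

open Classical in
lemma layer_count (V C : Submodule K W) (hVC : IsCompl V C) (i : ℕ)
    (hi : i ≤ Module.finrank K ↥V) :
    (Finset.univ.filter (fun A : Submodule K W =>
        A ≤ V ∧ Module.finrank K ↥A = Module.finrank K ↥V - i)).card
    * (Finset.univ.filter (fun B : Submodule K W =>
        B ≤ C ∧ Module.finrank K ↥B = i)).card
    * Fintype.card K ^ (i * i)
    ≤ (Finset.univ.filter (fun U : Submodule K W =>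
        Module.finrank K ↥U = Module.finrank K ↥V
          ∧ Module.finrank K ↥(U ⊓ V) = Module.finrank K ↥V - i)).card := by
  set ℓ := Module.finrank K ↥V with hldef
  set PA := Finset.univ.filter (fun A : Submodule K W =>
    A ≤ V ∧ Module.finrank K ↥A = ℓ - i) with hPA
  set PB := Finset.univ.filter (fun B : Submodule K W =>
    B ≤ C ∧ Module.finrank K ↥B = i) with hPB
  set E := Finset.univ.filter (fun U : Submodule K W =>
    Module.finrank K ↥U = ℓ ∧ Module.finrank K ↥(U ⊓ V) = ℓ - i) with hE
  set g : Submodule K W × Submodule K W → Finset (Submodule K W) :=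
    fun p => (Finset.univ : Finset (↥p.2 →ₗ[K] ↥(compIn V p.1))).image
      (fun φ => Ucon p.1 p.2 (compIn V p.1) φ) with hg
  -- facts about members of PA ×ˢ PB
  have hmem : ∀ p ∈ PA ×ˢ PB, p.1 ≤ V ∧ Module.finrank K ↥p.1 = ℓ - i
      ∧ p.2 ≤ C ∧ Module.finrank K ↥p.2 = i := by
    intro p hp
    rw [Finset.mem_product, hPA, hPB] at hp
    simp only [Finset.mem_filter, Finset.mem_univ, true_and] at hp
    exact ⟨hp.1.1, hp.1.2, hp.2.1, hp.2.2⟩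
  have hcompl : ∀ p ∈ PA ×ˢ PB, Module.finrank K ↥(compIn V p.1) = i := by
    intro p hp
    obtain ⟨h1, h2, _, _⟩ := hmem p hp
    have := compIn_finrank V p.1 h1
    omega
  -- each image lands in E
  have hsub : ∀ p ∈ PA ×ˢ PB, g p ⊆ E := by
    intro p hp
    obtain ⟨h1, h2, h3, h4⟩ := hmem p hp
    intro U hU
    rw [hg] at hU
    obtain ⟨φ, _, rfl⟩ := Finset.mem_image.1 hU
    rw [hE]
    simp only [Finset.mem_filter, Finset.mem_univ, true_and]
    constructor
    · rw [Ucon_finrank h1 (compIn_le V p.1) h3 hVC φ, h2, h4]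
      omega
    · rw [Ucon_inf h1 (compIn_le V p.1) h3 hVC φ, h2]
  -- image cardinality
  have hcard : ∀ p ∈ PA ×ˢ PB, (g p).card = Fintype.card K ^ (i * i) := by
    intro p hp
    obtain ⟨h1, h2, h3, h4⟩ := hmem p hp
    rw [hg]
    rw [Finset.card_image_of_injective _
      (fun φ₁ φ₂ h => Ucon_injective h1 (compIn_le V p.1)
        (compIn_inf V p.1 h1) h3 hVC φ₁ φ₂ h)]
    rw [Finset.card_univ, card_linearMap, h4, hcompl p hp]
  -- disjointness
  have hdisj : ∀ p₁ ∈ PA ×ˢ PB, ∀ p₂ ∈ PA ×ˢ PB, p₁ ≠ p₂ →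
      Disjoint (g p₁) (g p₂) := by
    intro p₁ hp₁ p₂ hp₂ hne
    obtain ⟨a1, b1, c1, d1⟩ := hmem p₁ hp₁
    obtain ⟨a2, b2, c2, d2⟩ := hmem p₂ hp₂
    rw [Finset.disjoint_left]
    intro U hU1 hU2
    rw [hg] at hU1 hU2
    obtain ⟨φ₁, _, he1⟩ := Finset.mem_image.1 hU1
    obtain ⟨φ₂, _, he2⟩ := Finset.mem_image.1 hU2
    apply hne
    have hA : p₁.1 = p₂.1 := by
      rw [← Ucon_inf a1 (compIn_le V p₁.1) c1 hVC φ₁,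
        ← Ucon_inf a2 (compIn_le V p₂.1) c2 hVC φ₂, he1, he2]
    have hB : p₁.2 = p₂.2 := by
      rw [← Ucon_sup_inf a1 (compIn_le V p₁.1) c1 hVC φ₁,
        ← Ucon_sup_inf a2 (compIn_le V p₂.1) c2 hVC φ₂, he1, he2]
    exact Prod.ext hA hB
  calc PA.card * PB.card * Fintype.card K ^ (i * i)
      = ((PA ×ˢ PB).biUnion g).card := by
        rw [Finset.card_biUnion hdisj, Finset.sum_congr rfl hcard,
          Finset.sum_const, smul_eq_mul, Finset.card_product]
    _ ≤ E.card := Finset.card_le_card (Finset.biUnion_subset.2 hsub)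

open Classical in
lemma packing (D ℓ : ℕ) (hD : 1 ≤ D) (hl : ℓ ≤ Module.finrank K W)
    (Lp : Finset (Submodule K W))
    (hdim : ∀ V ∈ Lp, Module.finrank K ↥V = ℓ)
    (hdist : ∀ U ∈ Lp, ∀ V ∈ Lp, U ≠ V → (2 * D : ℤ) ≤ sdist U V) :
    (∑ i ∈ Finset.range ((D - 1) / 2 + 1),
      (Fintype.card K : ℚ) ^ (i ^ 2) * gaussBinom (Fintype.card K) ℓ i
        * gaussBinom (Fintype.card K) (Module.finrank K W - ℓ) i) * Lp.card
    ≤ gaussBinom (Fintype.card K) (Module.finrank K W) ℓ := by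
  have hq2 : 2 ≤ Fintype.card K := Fintype.one_lt_card
  set q := Fintype.card K with hqdef
  set m := Module.finrank K W with hmdef
  set T := (D - 1) / 2 with hTdef
  set T' := min T (min ℓ (m - ℓ)) with hT'def
  -- the sum truncates at T'
  have hsum_trunc : ∀ V : Submodule K W,
      ∑ i ∈ Finset.range (T + 1),
        (q : ℚ) ^ (i ^ 2) * gaussBinom q ℓ i * gaussBinom q (m - ℓ) i
      = ∑ i ∈ Finset.range (T' + 1),
        (q : ℚ) ^ (i ^ 2) * gaussBinom q ℓ i * gaussBinom q (m - ℓ) i := by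
    intro V
    refine (Finset.sum_subset (Finset.range_subset_range.2 (by omega : T' + 1 ≤ T + 1)) ?_).symm
    intro i hi hni
    rw [Finset.mem_range] at hi
    rw [Finset.mem_range, not_lt] at hni
    have : ℓ < i ∨ m - ℓ < i := by omega
    rcases this with h | h
    · rw [gaussBinom_zero_of_lt hq2 h]; ring
    · rw [gaussBinom_zero_of_lt hq2 h]; ring
  -- the sphere around a codeword
  set sph : Submodule K W → Finset (Submodule K W) := fun V =>
    Finset.univ.filter (fun U : Submodule K W =>
      Module.finrank K ↥U = ℓ ∧
      (ℓ : ℤ) - T ≤ (Module.finrank K ↥(U ⊓ V) : ℤ)) with hsph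
  -- per-codeword sphere bound
  have hper : ∀ V ∈ Lp,
      ∑ i ∈ Finset.range (T' + 1),
        (q : ℚ) ^ (i ^ 2) * gaussBinom q ℓ i * gaussBinom q (m - ℓ) i
      ≤ ((sph V).card : ℚ) := by
    intro V hV
    have hVl : Module.finrank K ↥V = ℓ := hdim V hV
    obtain ⟨C, hVC⟩ := Submodule.exists_isCompl V
    have hCrank : Module.finrank K ↥C = m - ℓ := by
      have := Submodule.finrank_add_eq_of_isCompl hVC
      rw [hVl, ← hmdef] at this
      omega
    -- exact layers
    set E : ℕ → Finset (Submodule K W) := fun i =>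
      Finset.univ.filter (fun U : Submodule K W =>
        Module.finrank K ↥U = ℓ ∧ Module.finrank K ↥(U ⊓ V) = ℓ - i) with hEdef
    have hlayer : ∀ i, i ≤ T' → (q : ℚ) ^ (i ^ 2) * gaussBinom q ℓ i
        * gaussBinom q (m - ℓ) i ≤ ((E i).card : ℚ) := by
      intro i hi
      have hil : i ≤ ℓ := by omega
      have himl : i ≤ m - ℓ := by omega
      have hcount := layer_count V C hVC i (by rw [hVl]; omega)
      have hNA := card_sub_q V (ℓ - i) (by rw [hVl]; omega)
      have hNB := card_sub_q C i (by rw [hCrank]; omega)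
      rw [hVl] at hNA hcount
      rw [hCrank] at hNB
      have hsymm : gaussBinom q ℓ i = gaussBinom q ℓ (ℓ - i) :=
        gaussBinom_symm hq2 hil
      calc (q : ℚ) ^ (i ^ 2) * gaussBinom q ℓ i * gaussBinom q (m - ℓ) i
          = (((Finset.univ.filter (fun A : Submodule K W =>
              A ≤ V ∧ Module.finrank K ↥A = ℓ - i)).card
            * (Finset.univ.filter (fun B : Submodule K W =>
              B ≤ C ∧ Module.finrank K ↥B = i)).card
            * q ^ (i * i) : ℕ) : ℚ) := by
            push_cast
            rw [hNA, hNB, ← hsymm, show i * i = i ^ 2 by ring]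
            ring
          _ ≤ ((E i).card : ℚ) := by
            exact_mod_cast hcount
    -- layers are disjoint and contained in the sphere
    have hEdisj : ∀ i₁ ∈ Finset.range (T' + 1), ∀ i₂ ∈ Finset.range (T' + 1),
        i₁ ≠ i₂ → Disjoint (E i₁) (E i₂) := by
      intro i₁ h₁ i₂ h₂ hne
      rw [Finset.mem_range] at h₁ h₂
      rw [Finset.disjoint_left]
      intro U hU1 hU2
      rw [hEdef] at hU1 hU2
      simp only [Finset.mem_filter, Finset.mem_univ, true_and] at hU1 hU2
      have e1 := hU1.2
      have e2 := hU2.2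
      omega
    have hEsub : ∀ i ∈ Finset.range (T' + 1), E i ⊆ sph V := by
      intro i hi
      rw [Finset.mem_range] at hi
      intro U hU
      rw [hEdef] at hU
      simp only [Finset.mem_filter, Finset.mem_univ, true_and] at hU
      rw [hsph]
      simp only [Finset.mem_filter, Finset.mem_univ, true_and]
      refine ⟨hU.1, ?_⟩
      have := hU.2
      omega
    calc ∑ i ∈ Finset.range (T' + 1),
          (q : ℚ) ^ (i ^ 2) * gaussBinom q ℓ i * gaussBinom q (m - ℓ) i
        ≤ ∑ i ∈ Finset.range (T' + 1), ((E i).card : ℚ) := by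
          apply Finset.sum_le_sum
          intro i hi
          exact hlayer i (by rw [Finset.mem_range] at hi; omega)
      _ = ((∑ i ∈ Finset.range (T' + 1), (E i).card : ℕ) : ℚ) := by push_cast; rfl
      _ ≤ (((sph V).card : ℕ) : ℚ) := by
          have h1 : ∑ i ∈ Finset.range (T' + 1), (E i).card
              = ((Finset.range (T' + 1)).biUnion E).card :=
            (Finset.card_biUnion hEdisj).symm
          have h2 : (Finset.range (T' + 1)).biUnion E ⊆ sph V :=
            Finset.biUnion_subset.2 hEsub
          exact_mod_cast Nat.cast_le.2 (h1 ▸ Finset.card_le_card h2)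
  -- spheres around distinct codewords are disjoint
  have hsdisj : ∀ V₁ ∈ Lp, ∀ V₂ ∈ Lp, V₁ ≠ V₂ → Disjoint (sph V₁) (sph V₂) := by
    intro V₁ h₁ V₂ h₂ hne
    rw [Finset.disjoint_left]
    intro U hU1 hU2
    rw [hsph] at hU1 hU2
    simp only [Finset.mem_filter, Finset.mem_univ, true_and] at hU1 hU2
    obtain ⟨hUl, ha⟩ := hU1
    obtain ⟨_, hb⟩ := hU2
    have hd := hdist V₁ h₁ V₂ h₂ hne
    rw [sdist, hdim V₁ h₁, hdim V₂ h₂] at hd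
    -- submodule dimension estimates
    have hkey := Submodule.finrank_sup_add_finrank_inf_eq (U ⊓ V₁) (U ⊓ V₂)
    have hs1 : Module.finrank K ↥((U ⊓ V₁) ⊔ (U ⊓ V₂)) ≤ Module.finrank K ↥U :=
      Submodule.finrank_mono (sup_le inf_le_left inf_le_left)
    have hs2 : Module.finrank K ↥((U ⊓ V₁) ⊓ (U ⊓ V₂))
        ≤ Module.finrank K ↥(V₁ ⊓ V₂) :=
      Submodule.finrank_mono (le_inf (inf_le_of_left_le inf_le_right)
        (inf_le_of_right_le inf_le_right))
    have hT2 : 2 * T ≤ D - 1 := by omega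
    omega
  -- assemble
  have hGr := card_subspaces_q (K := K) (M := W) ℓ hl
  calc (∑ i ∈ Finset.range (T + 1),
        (q : ℚ) ^ (i ^ 2) * gaussBinom q ℓ i * gaussBinom q (m - ℓ) i) * Lp.card
      = ∑ V ∈ Lp, ∑ i ∈ Finset.range (T' + 1),
          (q : ℚ) ^ (i ^ 2) * gaussBinom q ℓ i * gaussBinom q (m - ℓ) i := by
        rw [Finset.sum_const, hsum_trunc ⊥]
        ring
    _ ≤ ∑ V ∈ Lp, ((sph V).card : ℚ) := Finset.sum_le_sum hper
    _ = ((∑ V ∈ Lp, (sph V).card : ℕ) : ℚ) := by push_cast; rfl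
    _ ≤ ((Finset.univ.filter (fun U : Submodule K W =>
          Module.finrank K ↥U = ℓ)).card : ℚ) := by
        have h1 : ∑ V ∈ Lp, (sph V).card = (Lp.biUnion sph).card :=
          (Finset.card_biUnion hsdisj).symm
        have h2 : Lp.biUnion sph ⊆ Finset.univ.filter (fun U : Submodule K W =>
            Module.finrank K ↥U = ℓ) := by
          apply Finset.biUnion_subset.2
          intro V _
          intro U hU
          rw [hsph] at hU
          simp only [Finset.mem_filter, Finset.mem_univ, true_and] at hU ⊢
          exact hU.1
        exact_mod_cast Nat.cast_le.2 (h1 ▸ Finset.card_le_card h2)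
    _ = gaussBinom q m ℓ := hGr

end W
end SPB

theorem hybrid_sphere_packing_bound {q n ℓ D d : ℕ} {K : Type} [Field K] [Fintype K]
    (hq : Fintype.card K = q) (hd : 1 ≤ d) (hD : 1 ≤ D) (hn : ℓ + (d - 1) ≤ n)
    (L : Finset (Submodule K (Fin n → K)))
    (hdim : ∀ V ∈ L, Module.finrank K ↥V = ℓ)
    (hdist : ∀ U ∈ L, ∀ V ∈ L, U ≠ V → (2 * D : ℤ) ≤ sdist U V)
    (herase : ∀ S : Finset (Fin n), S.card = d - 1 →
      Set.InjOn (fun V : Submodule K (Fin n → K) => V.map (deleteCoords n S))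
        (L : Set (Submodule K (Fin n → K))) ∧
      (∀ V ∈ L, Module.finrank K ↥(V.map (deleteCoords n S)) = ℓ) ∧
      (∀ U ∈ L, ∀ V ∈ L, U ≠ V →
        (2 * D : ℤ) ≤ sdist (U.map (deleteCoords n S)) (V.map (deleteCoords n S)))) :
    (q : ℚ) ^ (ℓ * (d - 1)) *
      (∑ i ∈ Finset.range ((D - 1) / 2 + 1),
        (q : ℚ) ^ (i ^ 2) * gaussBinom q ℓ i * gaussBinom q (n - (d - 1) - ℓ) i) *
      (L.card : ℚ) ≤ gaussBinom q n ℓ := by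
  classical
  subst hq
  have hq2 : 2 ≤ Fintype.card K := Fintype.one_lt_card
  -- choose an erasure set of size d - 1
  obtain ⟨S, -, hS⟩ := Finset.exists_subset_card_eq
    (s := (Finset.univ : Finset (Fin n))) (n := d - 1)
    (by rw [Finset.card_univ, Fintype.card_fin]; omega)
  obtain ⟨hinj, hdim', hdist'⟩ := herase S hS
  -- the punctured space
  have hrank : Module.finrank K ({i : Fin n // i ∉ S} → K) = n - (d - 1) := by
    rw [Module.finrank_pi]
    rw [Fintype.card_subtype_compl, Fintype.card_fin, Fintype.card_coe, hS]
  set L' := L.image (fun V => V.map (deleteCoords n S)) with hL'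
  have hcardL' : L'.card = L.card := Finset.card_image_of_injOn hinj
  have hdim'' : ∀ V ∈ L', Module.finrank K ↥V = ℓ := by
    intro V hV
    obtain ⟨U, hU, rfl⟩ := Finset.mem_image.1 hV
    exact hdim' U hU
  have hdist'' : ∀ U ∈ L', ∀ V ∈ L', U ≠ V → (2 * D : ℤ) ≤ sdist U V := by
    intro U hU V hV hne
    obtain ⟨U₀, hU₀, rfl⟩ := Finset.mem_image.1 hU
    obtain ⟨V₀, hV₀, rfl⟩ := Finset.mem_image.1 hV
    exact hdist' U₀ hU₀ V₀ hV₀ (fun h => hne (by rw [h]))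
  have hl' : ℓ ≤ Module.finrank K ({i : Fin n // i ∉ S} → K) := by
    rw [hrank]; omega
  have hpack := SPB.packing (K := K) (W := {i : Fin n // i ∉ S} → K) D ℓ hD hl' L'
    hdim'' hdist''
  rw [hrank, hcardL'] at hpack
  have hstep := SPB.step5 (q := Fintype.card K) hq2 (ℓ := ℓ) (m := n - (d - 1)) (n := n)
    (by omega) (by omega)
  rw [show n - (n - (d - 1)) = d - 1 by omega] at hstep
  have hpow : (0 : ℚ) ≤ (Fintype.card K : ℚ) ^ (ℓ * (d - 1)) := by positivity
  calc (Fintype.card K : ℚ) ^ (ℓ * (d - 1)) *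
        (∑ i ∈ Finset.range ((D - 1) / 2 + 1),
          (Fintype.card K : ℚ) ^ (i ^ 2) * gaussBinom (Fintype.card K) ℓ i
            * gaussBinom (Fintype.card K) (n - (d - 1) - ℓ) i) * (L.card : ℚ)
      = (Fintype.card K : ℚ) ^ (ℓ * (d - 1)) *
        ((∑ i ∈ Finset.range ((D - 1) / 2 + 1),
          (Fintype.card K : ℚ) ^ (i ^ 2) * gaussBinom (Fintype.card K) ℓ i
            * gaussBinom (Fintype.card K) (n - (d - 1) - ℓ) i) * (L.card : ℚ)) := by
        ring
    _ ≤ (Fintype.card K : ℚ) ^ (ℓ * (d - 1)) *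
        gaussBinom (Fintype.card K) (n - (d - 1)) ℓ :=
        mul_le_mul_of_nonneg_left hpack hpow
    _ ≤ gaussBinom (Fintype.card K) n ℓ := hstep
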